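/- Let E1 and E2 be equivalence relations on V and let F = u_{E2} ∘ u_{E1}, so that (E1, E2) is a UU-solution of F. Then (E1, E2) is the unique UU-solution of F if and only if all of the following hold: (i) for all x, y ∈ V with ¬(x E2 y), u_{E1}([x]_{E2}) ≠ u_{E1}([y]_{E2}); (ii) for all x, y ∈ V with ¬(x E1 y), u_{E2}([x]_{E1}) ≠ u_{E2}([y]_{E1}); (iii) for every x ∈ V there exists z ∈ V such that [x]_{E2} ∩ [z]_{E1} has exactly one element; (iv) for every x ∈ V there exists z ∈ V such that [x]_{E1} ∩ [z]_{E2} has exactly one element. -/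
import Mathlib


variable {V : Type*}

/-- The lower approximation of `X` w.r.t. the equivalence relation `E`:
all points whose `E`-class is contained in `X`. -/
def lowerApprox (E : Setoid V) (X : Set V) : Set V := {x | {y | E.r x y} ⊆ X}

/-- The upper approximation of `X` w.r.t. the equivalence relation `E`:
all points whose `E`-class meets `X`. -/
def upperApprox (E : Setoid V) (X : Set V) : Set V := {x | ({y | E.r x y} ∩ X).Nonempty}

/-- The positive region of `D` with respect to `C`: the union over the
`D`-equivalence classes of their `C`-lower approximations. -/
def posRegion (C D : Setoid V) : Set V := ⋃ x : V, lowerApprox C {y | D.r x y}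

/-- `(E1, E2)` is an LL-solution of `F` if `F X = l_{E2}(l_{E1}(X))` for all `X`. -/
def IsLLSolution (E1 E2 : Setoid V) (F : Set V → Set V) : Prop :=
  ∀ X : Set V, F X = lowerApprox E2 (lowerApprox E1 X)

/-- `(E1, E2)` is the unique LL-solution of `F`. -/
def IsUniqueLLSolution (E1 E2 : Setoid V) (F : Set V → Set V) : Prop :=
  IsLLSolution E1 E2 F ∧
    ∀ E3 E4 : Setoid V, IsLLSolution E3 E4 F → E3 = E1 ∧ E4 = E2

/-- `(E1, E2)` is a UU-solution of `F` if `F X = u_{E2}(u_{E1}(X))` for all `X`. -/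
def IsUUSolution (E1 E2 : Setoid V) (F : Set V → Set V) : Prop :=
  ∀ X : Set V, F X = upperApprox E2 (upperApprox E1 X)

/-- `(E1, E2)` is the unique UU-solution of `F`. -/
def IsUniqueUUSolution (E1 E2 : Setoid V) (F : Set V → Set V) : Prop :=
  IsUUSolution E1 E2 F ∧
    ∀ E3 E4 : Setoid V, IsUUSolution E3 E4 F → E3 = E1 ∧ E4 = E2

/-- `(E1, E2)` is a UL-solution of `F` if `F X = u_{E2}(l_{E1}(X))` for all `X`. -/
def IsULSolution (E1 E2 : Setoid V) (F : Set V → Set V) : Prop :=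
  ∀ X : Set V, F X = upperApprox E2 (lowerApprox E1 X)

/-- `(E1, E2)` is the unique UL-solution of `F`. -/
def IsUniqueULSolution (E1 E2 : Setoid V) (F : Set V → Set V) : Prop :=
  IsULSolution E1 E2 F ∧
    ∀ E3 E4 : Setoid V, IsULSolution E3 E4 F → E3 = E1 ∧ E4 = E2

/-- `(E1, E2)` is an LU-solution of `F` if `F X = l_{E2}(u_{E1}(X))` for all `X`. -/
def IsLUSolution (E1 E2 : Setoid V) (F : Set V → Set V) : Prop :=
  ∀ X : Set V, F X = lowerApprox E2 (upperApprox E1 X)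

/-- `(E1, E2)` is the unique LU-solution of `F`. -/
def IsUniqueLUSolution (E1 E2 : Setoid V) (F : Set V → Set V) : Prop :=
  IsLUSolution E1 E2 F ∧
    ∀ E3 E4 : Setoid V, IsLUSolution E3 E4 F → E3 = E1 ∧ E4 = E2

section UUAux

variable {V : Type*}

/-- Membership in a double upper approximation, unfolded. -/
private lemma mem_uu {E1 E2 : Setoid V} {X : Set V} {a : V} :
    a ∈ upperApprox E2 (upperApprox E1 X) ↔ ∃ w t, E2.r a w ∧ E1.r w t ∧ t ∈ X := by
  constructor
  · rintro ⟨w, hw, t, ht, htX⟩; exact ⟨w, t, hw, ht, htX⟩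
  · rintro ⟨w, t, hw, ht, htX⟩; exact ⟨w, hw, t, ht, htX⟩

private lemma mem_upper {E : Setoid V} {S : Set V} {a : V} :
    a ∈ upperApprox E S ↔ ∃ w, E.r a w ∧ w ∈ S := Iff.rfl

/-- The setoid obtained from `E` by merging the classes of `x` and `y`. -/
private def mergeSetoid (E : Setoid V) (x y : V) (hxy : ¬ E.r x y) : Setoid V where
  r a b := E.r a b ∨ (E.r x a ∧ E.r y b) ∨ (E.r y a ∧ E.r x b)
  iseqv := by
    refine ⟨fun a => Or.inl (E.refl a), ?_, ?_⟩
    · rintro a b (h | ⟨h1, h2⟩ | ⟨h1, h2⟩)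
      · exact Or.inl (E.symm h)
      · exact Or.inr (Or.inr ⟨h2, h1⟩)
      · exact Or.inr (Or.inl ⟨h2, h1⟩)
    · rintro a b c (h | ⟨h1, h2⟩ | ⟨h1, h2⟩) (h' | ⟨h1', h2'⟩ | ⟨h1', h2'⟩)
      · exact Or.inl (E.trans h h')
      · exact Or.inr (Or.inl ⟨E.trans h1' (E.symm h), h2'⟩)
      · exact Or.inr (Or.inr ⟨E.trans h1' (E.symm h), h2'⟩)
      · exact Or.inr (Or.inl ⟨h1, E.trans h2 h'⟩)
      · exact absurd (E.trans h1' (E.symm h2)) hxy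
      · exact Or.inl (E.trans (E.symm h1) h2')
      · exact Or.inr (Or.inr ⟨h1, E.trans h2 h'⟩)
      · exact Or.inl (E.trans (E.symm h1) h2')
      · exact absurd (E.trans h2 (E.symm h1')) hxy

-- A deterministic pick from `[x]_E ∩ [z]_D` (or `x` if that set is empty).
open Classical in
private noncomputable def pickf (E D : Setoid V) (x z : V) : V :=
  if h : ({w | E.r x w} ∩ {w | D.r z w}).Nonempty then h.some else x

private lemma pickf_mem {E D : Setoid V} {x z : V}
    (h : ({w | E.r x w} ∩ {w | D.r z w}).Nonempty) :
    E.r x (pickf E D x z) ∧ D.r z (pickf E D x z) := by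
  classical
  rw [pickf]
  rw [dif_pos h]
  exact h.some_mem

private lemma pickf_congr {E D : Setoid V} {x z z' : V} (h : D.r z z') :
    pickf E D x z = pickf E D x z' := by
  have hS : {w | D.r z w} = {w | D.r z' w} :=
    Set.ext fun w => ⟨fun hw => D.trans (D.symm h) hw, fun hw => D.trans h hw⟩
  classical
  unfold pickf
  rw [hS]

/-- The setoid obtained from `E` by splitting the class of `x` according to
whether an element is the `pickf`-chosen representative of its `D`-class. -/
private noncomputable def splitSetoid (E D : Setoid V) (x : V) : Setoid V where
  r a b := E.r a b ∧ (E.r x a → (pickf E D x a = a ↔ pickf E D x b = b))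
  iseqv := by
    refine ⟨fun a => ⟨E.refl a, fun _ => Iff.rfl⟩, ?_, ?_⟩
    · rintro a b ⟨h, hc⟩
      exact ⟨E.symm h, fun hxb => (hc (E.trans hxb (E.symm h))).symm⟩
    · rintro a b c ⟨h, hc⟩ ⟨h', hc'⟩
      exact ⟨E.trans h h', fun hxa => (hc hxa).trans (hc' (E.trans hxa h))⟩

private lemma split_le {E D : Setoid V} {x a b : V}
    (h : (splitSetoid E D x).r a b) : E.r a b := h.1

/-- Under the "no singleton intersection" hypothesis, for any `w` in the class of `x`
we can find `w'` in the class of `x`, `D`-equivalent to `w`, whose selection status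
matches any prescribed proposition `P`. -/
private lemma exists_matching {E D : Setoid V} {x : V}
    (H : ∀ z, ({w | E.r x w} ∩ {w | D.r z w}).Nonempty →
      ∃ a b, a ≠ b ∧ (E.r x a ∧ D.r z a) ∧ (E.r x b ∧ D.r z b))
    {w : V} (hw : E.r x w) (P : Prop) :
    ∃ w', E.r x w' ∧ D.r w w' ∧ ((pickf E D x w' = w') ↔ P) := by
  have hne : ({v | E.r x v} ∩ {v | D.r w v}).Nonempty := ⟨w, hw, D.refl w⟩
  set c := pickf E D x w with hc
  obtain ⟨hxc, hwc⟩ := pickf_mem hne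
  have hselc : pickf E D x c = c := by
    rw [← pickf_congr (E := E) hwc]
  obtain ⟨a, b, hab, ⟨hxa, hwa⟩, ⟨hxb, hwb⟩⟩ := H w hne
  have hd : ∃ d, E.r x d ∧ D.r w d ∧ d ≠ c := by
    by_cases hac : a = c
    · exact ⟨b, hxb, hwb, fun hbc => hab (hac.trans hbc.symm)⟩
    · exact ⟨a, hxa, hwa, hac⟩
  obtain ⟨d, hxd, hwd, hdc⟩ := hd
  have hseld : pickf E D x d ≠ d := by
    rw [← pickf_congr (E := E) hwd, ← hc]
    exact fun h => hdc h.symm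
  by_cases hP : P
  · exact ⟨c, hxc, hwc, iff_of_true hselc hP⟩
  · exact ⟨d, hxd, hwd, iff_of_false hseld hP⟩

/-- The split setoid genuinely differs from `E`. -/
private lemma split_ne {E D : Setoid V} {x : V}
    (H : ∀ z, ({w | E.r x w} ∩ {w | D.r z w}).Nonempty →
      ∃ a b, a ≠ b ∧ (E.r x a ∧ D.r z a) ∧ (E.r x b ∧ D.r z b)) :
    ∃ a b, E.r a b ∧ ¬ (splitSetoid E D x).r a b := by
  obtain ⟨c, hxc, hxc', hsc⟩ := exists_matching H (E.refl x) True
  obtain ⟨d, hxd, hxd', hsd⟩ := exists_matching H (E.refl x) False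
  refine ⟨c, d, E.trans (E.symm hxc) hxd, fun h => ?_⟩
  have := (h.2 hxc).symm.trans hsc
  exact hsd.mp (this.mpr trivial)

private lemma split_outer_sol {E1 E2 : Setoid V} {x : V}
    (H : ∀ z, ({w | E2.r x w} ∩ {w | E1.r z w}).Nonempty →
      ∃ a b, a ≠ b ∧ (E2.r x a ∧ E1.r z a) ∧ (E2.r x b ∧ E1.r z b)) :
    IsUUSolution E1 (splitSetoid E2 E1 x) (fun X => upperApprox E2 (upperApprox E1 X)) := by
  intro X
  refine Set.ext fun a => ?_
  simp only [mem_uu]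
  constructor
  · rintro ⟨w, t, h2, h1, ht⟩
    by_cases hxa : E2.r x a
    · have hxw : E2.r x w := E2.trans hxa h2
      obtain ⟨w', hxw', hww', hsel⟩ := exists_matching H hxw (pickf E2 E1 x a = a)
      refine ⟨w', t, ⟨E2.trans (E2.symm hxa) hxw', fun _ => hsel.symm⟩, ?_, ht⟩
      exact E1.trans (E1.symm hww') h1
    · exact ⟨w, t, ⟨h2, fun h => absurd h hxa⟩, h1, ht⟩
  · rintro ⟨w, t, h4, h1, ht⟩
    exact ⟨w, t, h4.1, h1, ht⟩

private lemma split_inner_sol {E1 E2 : Setoid V} {x : V}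
    (H : ∀ z, ({w | E1.r x w} ∩ {w | E2.r z w}).Nonempty →
      ∃ a b, a ≠ b ∧ (E1.r x a ∧ E2.r z a) ∧ (E1.r x b ∧ E2.r z b)) :
    IsUUSolution (splitSetoid E1 E2 x) E2 (fun X => upperApprox E2 (upperApprox E1 X)) := by
  intro X
  refine Set.ext fun z => ?_
  simp only [mem_uu]
  constructor
  · rintro ⟨w, t, h2, h1, ht⟩
    by_cases hxw : E1.r x w
    · obtain ⟨w', hxw', hww', hsel⟩ := exists_matching H hxw (pickf E1 E2 x t = t)
      refine ⟨w', t, E2.trans h2 hww', ⟨?_, fun _ => hsel⟩, ht⟩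
      exact E1.trans (E1.symm hxw') (E1.trans hxw h1)
    · exact ⟨w, t, h2, ⟨h1, fun h => absurd h hxw⟩, ht⟩
  · rintro ⟨w, t, h2, h3, ht⟩
    exact ⟨w, t, h2, h3.1, ht⟩

private lemma merge_outer_sol {E1 E2 : Setoid V} {x y : V} (hxy : ¬ E2.r x y)
    (hrow : upperApprox E1 {z | E2.r x z} = upperApprox E1 {z | E2.r y z}) :
    IsUUSolution E1 (mergeSetoid E2 x y hxy) (fun X => upperApprox E2 (upperApprox E1 X)) := by
  intro X
  refine Set.ext fun a => ?_
  simp only [mem_uu]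
  constructor
  · rintro ⟨w, t, h2, h1, ht⟩
    exact ⟨w, t, Or.inl h2, h1, ht⟩
  · rintro ⟨w, t, hm, h1, ht⟩
    rcases hm with h2 | ⟨hxa, hyw⟩ | ⟨hya, hxw⟩
    · exact ⟨w, t, h2, h1, ht⟩
    · have htm : t ∈ upperApprox E1 {z | E2.r y z} := ⟨w, E1.symm h1, hyw⟩
      rw [← hrow] at htm
      obtain ⟨u, htu, hxu⟩ := htm
      exact ⟨u, t, E2.trans (E2.symm hxa) hxu, E1.symm htu, ht⟩
    · have htm : t ∈ upperApprox E1 {z | E2.r x z} := ⟨w, E1.symm h1, hxw⟩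
      rw [hrow] at htm
      obtain ⟨u, htu, hyu⟩ := htm
      exact ⟨u, t, E2.trans (E2.symm hya) hyu, E1.symm htu, ht⟩

private lemma merge_inner_sol {E1 E2 : Setoid V} {x y : V} (hxy : ¬ E1.r x y)
    (hcol : upperApprox E2 {z | E1.r x z} = upperApprox E2 {z | E1.r y z}) :
    IsUUSolution (mergeSetoid E1 x y hxy) E2 (fun X => upperApprox E2 (upperApprox E1 X)) := by
  intro X
  refine Set.ext fun a => ?_
  simp only [mem_uu]
  constructor
  · rintro ⟨w, t, h2, h1, ht⟩
    exact ⟨w, t, h2, Or.inl h1, ht⟩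
  · rintro ⟨w, t, h2, hm, ht⟩
    rcases hm with h1 | ⟨hxw, hyt⟩ | ⟨hyw, hxt⟩
    · exact ⟨w, t, h2, h1, ht⟩
    · have ham : a ∈ upperApprox E2 {z | E1.r x z} := ⟨w, h2, hxw⟩
      rw [hcol] at ham
      obtain ⟨u, hau, hyu⟩ := ham
      exact ⟨u, t, hau, E1.trans (E1.symm hyu) hyt, ht⟩
    · have ham : a ∈ upperApprox E2 {z | E1.r y z} := ⟨w, h2, hyw⟩
      rw [← hcol] at ham
      obtain ⟨u, hau, hxu⟩ := ham
      exact ⟨u, t, hau, E1.trans (E1.symm hxu) hxt, ht⟩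

end UUAux

theorem stmt_17 [Fintype V] [Nonempty V] (E1 E2 : Setoid V) :
    IsUniqueUUSolution E1 E2 (fun X => upperApprox E2 (upperApprox E1 X)) ↔
      ((∀ x y : V, ¬ E2.r x y →
          upperApprox E1 {z | E2.r x z} ≠ upperApprox E1 {z | E2.r y z}) ∧
       (∀ x y : V, ¬ E1.r x y →
          upperApprox E2 {z | E1.r x z} ≠ upperApprox E2 {z | E1.r y z}) ∧
       (∀ x : V, ∃ z : V, ∃ a : V, {w | E2.r x w} ∩ {w | E1.r z w} = {a}) ∧
       (∀ x : V, ∃ z : V, ∃ a : V, {w | E1.r x w} ∩ {w | E2.r z w} = {a})) := by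
  classical
  constructor
  · rintro ⟨-, huniq⟩
    refine ⟨?_, ?_, ?_, ?_⟩
    · intro x y hxy heq
      have h := (huniq E1 (mergeSetoid E2 x y hxy) (merge_outer_sol hxy heq)).2
      have hm : (mergeSetoid E2 x y hxy).r x y := Or.inr (Or.inl ⟨E2.refl x, E2.refl y⟩)
      rw [h] at hm
      exact hxy hm
    · intro x y hxy heq
      have h := (huniq (mergeSetoid E1 x y hxy) E2 (merge_inner_sol hxy heq)).1
      have hm : (mergeSetoid E1 x y hxy).r x y := Or.inr (Or.inl ⟨E1.refl x, E1.refl y⟩)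
      rw [h] at hm
      exact hxy hm
    · intro x
      by_contra hns
      push_neg at hns
      have H : ∀ z, ({w | E2.r x w} ∩ {w | E1.r z w}).Nonempty →
          ∃ a b, a ≠ b ∧ (E2.r x a ∧ E1.r z a) ∧ (E2.r x b ∧ E1.r z b) := by
        intro z hz
        obtain ⟨a, ha⟩ := hz
        have : ∃ b ∈ ({w | E2.r x w} ∩ {w | E1.r z w}), b ≠ a := by
          by_contra hb
          push_neg at hb
          exact hns z a (Set.eq_singleton_iff_unique_mem.mpr ⟨ha, hb⟩)
        obtain ⟨b, hb, hba⟩ := this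
        exact ⟨a, b, fun h => hba h.symm, ⟨ha.1, ha.2⟩, ⟨hb.1, hb.2⟩⟩
      have h := (huniq E1 (splitSetoid E2 E1 x) (split_outer_sol H)).2
      obtain ⟨a, b, hab, hnab⟩ := split_ne H
      rw [h] at hnab
      exact hnab hab
    · intro x
      by_contra hns
      push_neg at hns
      have H : ∀ z, ({w | E1.r x w} ∩ {w | E2.r z w}).Nonempty →
          ∃ a b, a ≠ b ∧ (E1.r x a ∧ E2.r z a) ∧ (E1.r x b ∧ E2.r z b) := by
        intro z hz
        obtain ⟨a, ha⟩ := hz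
        have : ∃ b ∈ ({w | E1.r x w} ∩ {w | E2.r z w}), b ≠ a := by
          by_contra hb
          push_neg at hb
          exact hns z a (Set.eq_singleton_iff_unique_mem.mpr ⟨ha, hb⟩)
        obtain ⟨b, hb, hba⟩ := this
        exact ⟨a, b, fun h => hba h.symm, ⟨ha.1, ha.2⟩, ⟨hb.1, hb.2⟩⟩
      have h := (huniq (splitSetoid E1 E2 x) E2 (split_inner_sol H)).1
      obtain ⟨a, b, hab, hnab⟩ := split_ne H
      rw [h] at hnab
      exact hnab hab
  · rintro ⟨h1, h2, h3, h4⟩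
    refine ⟨fun X => rfl, ?_⟩
    intro E3 E4 hs
    have hR : ∀ a t, (∃ w, E2.r a w ∧ E1.r w t) ↔ (∃ w, E4.r a w ∧ E3.r w t) := by
      intro a t
      have h := Set.ext_iff.mp (hs {t}) a
      simp only [mem_uu] at h
      constructor
      · rintro ⟨w, hw, hwt⟩
        obtain ⟨w', t', h4', h3', ht'⟩ := h.mp ⟨w, t, hw, hwt, Set.mem_singleton t⟩
        rw [Set.mem_singleton_iff] at ht'
        subst ht'
        exact ⟨w', h4', h3'⟩
      · rintro ⟨w, hw, hwt⟩
        obtain ⟨w', t', h2', h1', ht'⟩ := h.mpr ⟨w, t, hw, hwt, Set.mem_singleton t⟩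
        rw [Set.mem_singleton_iff] at ht'
        subst ht'
        exact ⟨w', h2', h1'⟩
    have hE31 : ∀ z z', E3.r z z' → E1.r z z' := by
      intro z z' h33
      by_contra h11
      apply h2 z z' h11
      refine Set.ext fun a => ?_
      simp only [mem_upper, Set.mem_setOf_eq]
      constructor
      · rintro ⟨w, haw, hzw⟩
        obtain ⟨u, h4u, h3u⟩ := (hR a z).mp ⟨w, haw, E1.symm hzw⟩
        obtain ⟨v, h2v, h1v⟩ := (hR a z').mpr ⟨u, h4u, E3.trans h3u h33⟩
        exact ⟨v, h2v, E1.symm h1v⟩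
      · rintro ⟨w, haw, hzw⟩
        obtain ⟨u, h4u, h3u⟩ := (hR a z').mp ⟨w, haw, E1.symm hzw⟩
        obtain ⟨v, h2v, h1v⟩ := (hR a z).mpr ⟨u, h4u, E3.trans h3u (E3.symm h33)⟩
        exact ⟨v, h2v, E1.symm h1v⟩
    have hE42 : ∀ a a', E4.r a a' → E2.r a a' := by
      intro a a' h44
      by_contra h22
      apply h1 a a' h22
      refine Set.ext fun t => ?_
      simp only [mem_upper, Set.mem_setOf_eq]
      constructor
      · rintro ⟨w, htw, haw⟩
        obtain ⟨u, h4u, h3u⟩ := (hR a t).mp ⟨w, haw, E1.symm htw⟩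
        obtain ⟨v, h2v, h1v⟩ := (hR a' t).mpr ⟨u, E4.trans (E4.symm h44) h4u, h3u⟩
        exact ⟨v, E1.symm h1v, h2v⟩
      · rintro ⟨w, htw, haw⟩
        obtain ⟨u, h4u, h3u⟩ := (hR a' t).mp ⟨w, haw, E1.symm htw⟩
        obtain ⟨v, h2v, h1v⟩ := (hR a t).mpr ⟨u, E4.trans h44 h4u, h3u⟩
        exact ⟨v, E1.symm h1v, h2v⟩
    have hE13 : ∀ p q, E1.r p q → E3.r p q := by
      intro p q hpq
      obtain ⟨z, a, hza⟩ := h4 p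
      have hmem : a ∈ ({w | E1.r p w} ∩ {w | E2.r z w}) := by
        rw [hza]; exact rfl
      obtain ⟨hpa, hza'⟩ := hmem
      have huniqm : ∀ w, E1.r p w → E2.r z w → w = a := by
        intro w hw1 hw2
        have hw : w ∈ ({w | E1.r p w} ∩ {w | E2.r z w}) := ⟨hw1, hw2⟩
        rw [hza] at hw
        exact hw
      have key : ∀ y', E1.r p y' → E3.r a y' := by
        intro y' hy'
        obtain ⟨w, h4w, h3w⟩ := (hR z y').mp ⟨a, hza', E1.trans (E1.symm hpa) hy'⟩
        have hw1 : E1.r p w := E1.trans hy' (E1.symm (hE31 _ _ h3w))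
        have hwa := huniqm w hw1 (hE42 _ _ h4w)
        subst hwa
        exact h3w
      exact E3.trans (E3.symm (key p (E1.refl p))) (key q hpq)
    have hE24 : ∀ p q, E2.r p q → E4.r p q := by
      intro p q hpq
      obtain ⟨z, a, hza⟩ := h3 p
      have hmem : a ∈ ({w | E2.r p w} ∩ {w | E1.r z w}) := by
        rw [hza]; exact rfl
      obtain ⟨hpa, hza'⟩ := hmem
      have huniqm : ∀ w, E2.r p w → E1.r z w → w = a := by
        intro w hw1 hw2
        have hw : w ∈ ({w | E2.r p w} ∩ {w | E1.r z w}) := ⟨hw1, hw2⟩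
        rw [hza] at hw
        exact hw
      have key : ∀ y', E2.r p y' → E4.r y' a := by
        intro y' hy'
        obtain ⟨w, h4w, h3w⟩ := (hR y' z).mp ⟨a, E2.trans (E2.symm hy') hpa, E1.symm hza'⟩
        have hw1 : E2.r p w := E2.trans hy' (hE42 _ _ h4w)
        have hw2 : E1.r z w := E1.symm (hE31 _ _ h3w)
        have hwa := huniqm w hw1 hw2
        subst hwa
        exact h4w
      exact E4.trans (key p (E2.refl p)) (E4.symm (key q hpq))
    exact ⟨Setoid.ext fun p q => ⟨hE31 p q, hE13 p q⟩,
           Setoid.ext fun p q => ⟨hE42 p q, hE24 p q⟩⟩
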